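/- Let φ : ℝ → ℝ be a C², 2π-periodic solution of φ̈(τ) + |φ(τ)|^{1/2}φ(τ) = 0. Then for every ε ≥ 0 and for q = 0 as well as for q = π, the pair u∗(τ) = φ(τ)/(1+ε²)³, w∗(τ) = −εφ(τ)/(1+ε²)³ solves the differential advance-delay system ü∗(τ) = V'(εw∗(τ) − u∗(τ)) − V'(u∗(τ) − εw∗(τ−2q)) and ẅ∗(τ) = εV'(u∗(τ+2q) − εw∗(τ)) − εV'(εw∗(τ) − u∗(τ)) for all τ ∈ ℝ. -/

import Mathlib

open Real

/-- Hertzian force: `V'(x) = -(max(-x,0))^(3/2)`. -/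
noncomputable def V' (x : ℝ) : ℝ := -(max (-x) 0) ^ ((3:ℝ)/2)

lemma V'_key (a : ℝ) : V' (-a) - V' a = -(|a| ^ ((1:ℝ)/2) * a) := by
  unfold V'
  rcases le_total 0 a with ha | ha
  · rw [neg_neg, max_eq_left ha, max_eq_right (neg_nonpos.mpr ha),
      Real.zero_rpow (by norm_num), abs_of_nonneg ha]
    rcases ha.eq_or_lt with h | h
    · simp [← h, Real.zero_rpow]
    · rw [show (3:ℝ)/2 = 1/2 + 1 by norm_num, Real.rpow_add_one h.ne']
      ring
  · rw [neg_neg, max_eq_right ha, max_eq_left (neg_nonneg.mpr ha),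
      Real.zero_rpow (by norm_num), abs_of_nonpos ha]
    rcases ha.lt_or_eq with h | h
    · rw [show (3:ℝ)/2 = 1/2 + 1 by norm_num,
        Real.rpow_add_one (neg_ne_zero.mpr h.ne)]
      ring
    · simp [h, Real.zero_rpow]

lemma scale_key (x b : ℝ) (hb : 0 < b) :
    |x / b ^ 2| ^ ((1:ℝ)/2) * (x / b ^ 2) = |x| ^ ((1:ℝ)/2) * x / b ^ 3 := by
  rw [abs_div, abs_of_nonneg (by positivity : (0:ℝ) ≤ b ^ 2),
    Real.div_rpow (abs_nonneg x) (by positivity),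
    ← Real.sqrt_eq_rpow (b ^ 2), Real.sqrt_sq hb.le]
  rw [div_mul_div_comm]
  ring

/-- The exact travelling-wave solution (exact-2) for `q = 0` and `q = π`:
`u∗ = φ/(1+ε²)³`, `w∗ = -εφ/(1+ε²)³` solves the advance-delay system
for every `ε ≥ 0`. -/
theorem exact_solution_q_zero_and_pi
    (φ : ℝ → ℝ) (hφ : ContDiff ℝ 2 φ)
    (hφper : Function.Periodic φ (2 * π))
    (hφode : ∀ τ, deriv (deriv φ) τ + |φ τ| ^ ((1:ℝ)/2) * φ τ = 0)
    (ε : ℝ) (hε : 0 ≤ ε) (q : ℝ) (hq : q = 0 ∨ q = π) :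
    ∀ τ : ℝ,
      deriv (deriv (fun s : ℝ => φ s / (1 + ε ^ 2) ^ 3)) τ =
        V' (ε * (-ε * φ τ / (1 + ε ^ 2) ^ 3) - φ τ / (1 + ε ^ 2) ^ 3)
          - V' (φ τ / (1 + ε ^ 2) ^ 3 - ε * (-ε * φ (τ - 2 * q) / (1 + ε ^ 2) ^ 3)) ∧
      deriv (deriv (fun s : ℝ => -ε * φ s / (1 + ε ^ 2) ^ 3)) τ =
        ε * V' (φ (τ + 2 * q) / (1 + ε ^ 2) ^ 3 - ε * (-ε * φ τ / (1 + ε ^ 2) ^ 3))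
          - ε * V' (ε * (-ε * φ τ / (1 + ε ^ 2) ^ 3) - φ τ / (1 + ε ^ 2) ^ 3) := by
  intro τ
  have hb : (0:ℝ) < 1 + ε ^ 2 := by positivity
  have hb3 : ((1 + ε ^ 2) ^ 3 : ℝ) ≠ 0 := by positivity
  have hb2 : ((1 + ε ^ 2) ^ 2 : ℝ) ≠ 0 := by positivity
  -- periodicity
  have hper1 : φ (τ - 2 * q) = φ τ := by
    rcases hq with h | h
    · simp [h]
    · rw [h, show τ - 2 * π = τ - 2 * π from rfl]
      exact hφper.sub_eq τ
  have hper2 : φ (τ + 2 * q) = φ τ := by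
    rcases hq with h | h
    · simp [h]
    · rw [h, show (2:ℝ) * π = 2 * π from rfl]
      exact hφper τ
  -- differentiability
  have hφ1 : Differentiable ℝ φ := hφ.differentiable (by norm_num)
  have hφ2 : Differentiable ℝ (deriv φ) := by
    have : ContDiff ℝ ((1:ℕ∞) + 1) φ := by exact_mod_cast hφ
    exact (contDiff_succ_iff_deriv.mp this).2.2.differentiable (by simp)
  -- second derivatives of scaled functions
  have d1 : deriv (deriv (fun s : ℝ => φ s / (1 + ε ^ 2) ^ 3)) τ
      = deriv (deriv φ) τ / (1 + ε ^ 2) ^ 3 := by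
    have e : deriv (fun s : ℝ => φ s / (1 + ε ^ 2) ^ 3)
        = fun s => deriv φ s / (1 + ε ^ 2) ^ 3 := funext fun x => deriv_div_const _
    rw [e, deriv_div_const]
  have d2 : deriv (deriv (fun s : ℝ => -ε * φ s / (1 + ε ^ 2) ^ 3)) τ
      = -ε * deriv (deriv φ) τ / (1 + ε ^ 2) ^ 3 := by
    have e : deriv (fun s : ℝ => -ε * φ s / (1 + ε ^ 2) ^ 3)
        = fun s => -ε * deriv φ s / (1 + ε ^ 2) ^ 3 := by
      funext x
      rw [deriv_div_const, deriv_const_mul _ (hφ1 x)]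
    rw [e]
    rw [deriv_div_const, deriv_const_mul _ (hφ2 τ)]
  have hode : deriv (deriv φ) τ = -(|φ τ| ^ ((1:ℝ)/2) * φ τ) := by
    have := hφode τ; linarith
  set a : ℝ := φ τ / (1 + ε ^ 2) ^ 2 with ha
  have arg1 : ε * (-ε * φ τ / (1 + ε ^ 2) ^ 3) - φ τ / (1 + ε ^ 2) ^ 3 = -a := by
    rw [ha]; field_simp; ring
  have arg2 : φ τ / (1 + ε ^ 2) ^ 3 - ε * (-ε * φ (τ - 2 * q) / (1 + ε ^ 2) ^ 3) = a := by
    rw [hper1, ha]; field_simp; ring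
  have arg3 : φ (τ + 2 * q) / (1 + ε ^ 2) ^ 3 - ε * (-ε * φ τ / (1 + ε ^ 2) ^ 3) = a := by
    rw [hper2, ha]; field_simp; ring
  have hscale : |a| ^ ((1:ℝ)/2) * a = |φ τ| ^ ((1:ℝ)/2) * φ τ / (1 + ε ^ 2) ^ 3 :=
    scale_key (φ τ) (1 + ε ^ 2) hb
  constructor
  · rw [d1, arg1, arg2, V'_key a, hode, hscale]
    ring
  · rw [d2, arg3, arg1, hode]
    have : ε * V' a - ε * V' (-a) = -(ε * (V' (-a) - V' a)) := by ring
    rw [this, V'_key a, hscale]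
    ring
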